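/- Let m be a positive integer and let a be an integer with a ≤ m^2 − m − 1. Then there exists an integer n > 1 with π(n) = (n + a)/m; equivalently, there is a positive integer n with π(m·n − a) = n. -/

import Mathlib

open Finset

/-- The k-th prime, 1-indexed: `nthPrime 1 = 2`. -/
noncomputable def nthPrime (k : ℕ) : ℕ := Nat.nth Nat.Prime (k - 1)

/-- `IsS m S` says that `S` is the maximum of `{k*m - p_k : k ≥ 1}`. -/
def IsS (m : ℕ) (S : ℤ) : Prop :=
  IsGreatest {a : ℤ | ∃ k : ℕ, 0 < k ∧ a = (k : ℤ) * m - nthPrime k} S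

lemma my_centralBinom_le_pow (n : ℕ) (hn : 0 < n) :
    Nat.centralBinom n ≤ (2 * n) ^ Nat.primeCounting (2 * n) := by
  have hcard : ({p ∈ range (2*n+1) | p.Prime} : Finset ℕ).card = Nat.primeCounting (2*n) := by
    rw [Nat.primeCounting, Nat.primeCounting', Nat.count_eq_card_filter_range]
  calc Nat.centralBinom n
      = ∏ p ∈ range (2*n+1), p ^ (Nat.centralBinom n).factorization p :=
        (Nat.prod_pow_factorization_centralBinom n).symm
    _ = ∏ p ∈ ({p ∈ range (2*n+1) | p.Prime} : Finset ℕ),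
          p ^ (Nat.centralBinom n).factorization p := by
        refine (Finset.prod_subset (filter_subset _ _) ?_).symm
        intro p hp hp2
        have : ¬ p.Prime := by
          intro h; exact hp2 (mem_filter.mpr ⟨hp, h⟩)
        rw [Nat.factorization_eq_zero_of_not_prime _ this, pow_zero]
    _ ≤ (2*n) ^ ({p ∈ range (2*n+1) | p.Prime} : Finset ℕ).card := by
        refine Finset.prod_le_pow_card _ _ _ (fun p _ => ?_)
        exact Nat.pow_factorization_choose_le (by omega)
    _ = (2*n) ^ Nat.primeCounting (2*n) := by rw [hcard]

lemma my_pi_lower (t : ℕ) (ht : 3 ≤ t) :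
    2 ^ t ≤ t * Nat.primeCounting (2 ^ t) + t := by
  have h2n : 2 * 2 ^ (t-1) = 2 ^ t := by
    rw [← pow_succ']
    congr 1
    omega
  have hn : (4:ℕ) ≤ 2 ^ (t-1) := by
    calc (4:ℕ) = 2 ^ 2 := rfl
    _ ≤ 2 ^ (t-1) := Nat.pow_le_pow_right (by norm_num) (by omega)
  have h1 := Nat.four_pow_lt_mul_centralBinom _ hn
  have h2 := my_centralBinom_le_pow (2 ^ (t-1)) (by positivity)
  rw [h2n] at h2
  have h3 : 4 ^ 2 ^ (t-1) < 2 ^ (t-1) * (2 ^ t) ^ Nat.primeCounting (2 ^ t) :=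
    h1.trans_le (Nat.mul_le_mul_left _ h2)
  have h4 : (4:ℕ) ^ 2 ^ (t-1) = 2 ^ 2 ^ t := by
    rw [show (4:ℕ) = 2 ^ 2 from rfl, ← pow_mul, ← h2n]
  have h5 : 2 ^ (t-1) * (2 ^ t) ^ Nat.primeCounting (2 ^ t)
      = 2 ^ (t - 1 + t * Nat.primeCounting (2 ^ t)) := by
    rw [pow_add, ← pow_mul]
  rw [h4, h5] at h3
  have h6 := (Nat.pow_lt_pow_iff_right (by norm_num : (1:ℕ) < 2)).mp h3
  omega

lemma my_pi_upper (j k : ℕ) (hj : 0 < j) (hjk : j ≤ k) :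
    j * Nat.primeCounting (2 ^ k) ≤ j * 2 ^ j + 2 * 2 ^ k := by
  set N := 2 ^ k with hN
  set s := 2 ^ j with hs
  have hsN : s ≤ N + 1 :=
    le_trans (Nat.pow_le_pow_right (by norm_num) hjk) (by omega)
  set F : Finset ℕ := {p ∈ Ico s (N+1) | p.Prime} with hF
  -- π N ≤ s + F.card
  have hπ : Nat.primeCounting N ≤ s + F.card := by
    have hsplit : range (N+1) = range s ∪ Ico s (N+1) := by
      simp only [range_eq_Ico]
      exact (Finset.Ico_union_Ico_eq_Ico (Nat.zero_le _) hsN).symm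
    have : Nat.primeCounting N = ({p ∈ range (N+1) | p.Prime} : Finset ℕ).card := by
      rw [Nat.primeCounting, Nat.primeCounting', Nat.count_eq_card_filter_range]
    rw [this, hsplit, filter_union]
    calc (({p ∈ range s | p.Prime} : Finset ℕ) ∪ F).card
        ≤ ({p ∈ range s | p.Prime} : Finset ℕ).card + F.card := card_union_le _ _
      _ ≤ s + F.card := by
          gcongr
          exact le_trans (card_filter_le _ _) (by simp)
  -- s ^ F.card ≤ 4 ^ N
  have hFle : s ^ F.card ≤ 4 ^ N := by
    calc s ^ F.card ≤ ∏ p ∈ F, p := by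
          refine Finset.pow_card_le_prod _ _ _ (fun p hp => ?_)
          exact (mem_Ico.mp (mem_filter.mp hp).1).1
      _ ≤ primorial N := by
          refine Nat.le_of_dvd (primorial_pos N) ?_
          refine Finset.prod_dvd_prod_of_subset _ _ _ ?_
          intro p hp
          rw [mem_filter] at hp ⊢
          refine ⟨?_, hp.2⟩
          rw [mem_range]
          exact (mem_Ico.mp hp.1).2
      _ ≤ 4 ^ N := primorial_le_4_pow N
  -- hence j * F.card ≤ 2 * N
  have hjF : j * F.card ≤ 2 * N := by
    have : (2:ℕ) ^ (j * F.card) ≤ 2 ^ (2 * N) := by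
      calc (2:ℕ) ^ (j * F.card) = s ^ F.card := by rw [hs, pow_mul]
        _ ≤ 4 ^ N := hFle
        _ = 2 ^ (2 * N) := by rw [show (4:ℕ) = 2 ^ 2 from rfl, ← pow_mul]
    exact (Nat.pow_le_pow_iff_right (by norm_num)).mp this
  calc j * Nat.primeCounting N ≤ j * (s + F.card) := Nat.mul_le_mul_left _ hπ
    _ = j * s + j * F.card := by ring
    _ ≤ j * s + 2 * N := by omega

lemma my_step (n : ℕ) :
    Nat.primeCounting (n+1) = Nat.primeCounting n + if Nat.Prime (n+1) then 1 else 0 := by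
  rw [Nat.primeCounting, Nat.primeCounting', Nat.primeCounting, Nat.primeCounting',
    Nat.count_succ]

lemma my_cross (m : ℕ) (hm : 0 < m) (a : ℤ) :
    ∀ d n₀ : ℕ, a ≤ (m:ℤ) * Nat.primeCounting n₀ - n₀ →
      (m:ℤ) * Nat.primeCounting (n₀ + d) - (n₀ + d) < a →
      ∃ n : ℕ, n₀ ≤ n ∧ (m:ℤ) * Nat.primeCounting n = n + a := by
  intro d
  induction d with
  | zero =>
    intro n₀ h1 h2
    simp only [Nat.add_zero] at h2
    push_cast at h2
    linarith
  | succ d ih =>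
    intro n₀ h1 h2
    by_cases hc : a ≤ (m:ℤ) * Nat.primeCounting (n₀+1) - (n₀+1)
    · obtain ⟨n, hn, he⟩ := ih (n₀+1) hc
        (by
          rw [show n₀+1+d = n₀+(d+1) by omega]
          push_cast at h2 ⊢
          linarith)
      exact ⟨n, by omega, he⟩
    · push_neg at hc
      refine ⟨n₀, le_refl _, ?_⟩
      have hstep := my_step n₀
      have hm1 : (1:ℤ) ≤ (m:ℤ) := by exact_mod_cast hm
      split_ifs at hstep with hp
      · exfalso
        rw [hstep] at hc
        push_cast at hc
        linarith
      · rw [hstep] at hc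
        push_cast at hc
        refine le_antisymm (by linarith) (by linarith)

lemma my_cube_le (m : ℕ) (hm : 12 ≤ m) : m ^ 3 ≤ 2 ^ (m - 1) := by
  induction m, hm using Nat.le_induction with
  | base => norm_num
  | succ m hm ih =>
    have hm' : 12 ≤ m := hm
    have h4 : 4 ≤ m := by omega
    have h1 : (m+1) ^ 3 ≤ 2 * m ^ 3 := by
      nlinarith [Nat.mul_le_mul_right (m*m) h4, Nat.mul_le_mul_right m hm']
    calc (m+1) ^ 3 ≤ 2 * m ^ 3 := h1
      _ ≤ 2 * 2 ^ (m-1) := by omega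
      _ = 2 ^ (m - 1 + 1) := by rw [pow_succ]; ring
      _ = 2 ^ (m + 1 - 1) := by congr 1; omega

lemma my_witness (m : ℕ) (hm : 0 < m) :
    ∃ n₀ : ℕ, 2 ≤ n₀ ∧ (n₀:ℤ) + ((m:ℤ)^2 - m - 1) ≤ (m:ℤ) * Nat.primeCounting n₀ := by
  have h2 : Nat.primeCounting 2 = 1 := by decide
  have h3 : Nat.primeCounting 3 = 2 := by decide
  have h7 : Nat.primeCounting 7 = 4 := by decide
  have h13 : Nat.primeCounting 13 = 6 := by decide
  have h59 : Nat.primeCounting 59 = 17 := by decide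
  rcases le_or_gt m 11 with h | h
  · interval_cases m
    · exact ⟨2, by norm_num, by rw [h2]; norm_num⟩
    · exact ⟨3, by norm_num, by rw [h3]; norm_num⟩
    · exact ⟨7, by norm_num, by rw [h7]; norm_num⟩
    · exact ⟨13, by norm_num, by rw [h13]; norm_num⟩
    · exact ⟨59, by norm_num, by rw [h59]; norm_num⟩
    · exact ⟨59, by norm_num, by rw [h59]; norm_num⟩
    · exact ⟨59, by norm_num, by rw [h59]; norm_num⟩
    · exact ⟨59, by norm_num, by rw [h59]; norm_num⟩
    · exact ⟨59, by norm_num, by rw [h59]; norm_num⟩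
    · exact ⟨59, by norm_num, by rw [h59]; norm_num⟩
    · exact ⟨59, by norm_num, by rw [h59]; norm_num⟩
  · -- m ≥ 12
    refine ⟨2 ^ (m-1), ?_, ?_⟩
    · calc 2 = 2 ^ 1 := rfl
        _ ≤ 2 ^ (m-1) := Nat.pow_le_pow_right (by norm_num) (by omega)
    · have hl := my_pi_lower (m-1) (by omega)
      have hc := my_cube_le m (by omega)
      set P := Nat.primeCounting (2 ^ (m-1)) with hP
      have h1 : ((2:ℤ) ^ (m-1)) ≤ ((m:ℤ) - 1) * P + ((m:ℤ) - 1) := by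
        have := hl
        zify at this
        have he : (((m-1 : ℕ)):ℤ) = (m:ℤ) - 1 := by
          have : (1:ℕ) ≤ m := hm
          push_cast [Nat.cast_sub this]
          ring
        rw [he] at this
        exact this
      have h2 : ((m:ℤ)) ^ 3 ≤ (2:ℤ) ^ (m-1) := by exact_mod_cast hc
      have hm12 : (12:ℤ) ≤ (m:ℤ) := by exact_mod_cast h
      have hP0 : (0:ℤ) ≤ (P:ℤ) := by positivity
      have key : ((m:ℤ) - 1) * ((2:ℤ) ^ (m-1) + ((m:ℤ)^2 - m - 1))
          ≤ ((m:ℤ) - 1) * ((m:ℤ) * P) := by nlinarith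
      have := le_of_mul_le_mul_left key (by linarith : (0:ℤ) < (m:ℤ) - 1)
      exact_mod_cast this

theorem stmt9 (m : ℕ) (hm : 0 < m) (a : ℤ) (ha : a ≤ (m : ℤ) ^ 2 - m - 1) :
    (∃ n : ℕ, 1 < n ∧ (m : ℤ) * Nat.primeCounting n = n + a) ∧
    (∃ n : ℕ, 0 < n ∧ ∃ N : ℕ, (N : ℤ) = (m : ℤ) * n - a ∧ Nat.primeCounting N = n) := by
  obtain ⟨n₀, hn₀2, hw⟩ := my_witness m hm
  have h1 : a ≤ (m:ℤ) * Nat.primeCounting n₀ - n₀ := by linarith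
  -- choose large k
  set c : ℕ := 2 * m * 2 ^ (4*m) + n₀ + ((-2) * a).toNat with hc
  have hcN : c < 2 ^ c := Nat.lt_two_pow_self (n := c)
  have hjc : 4 * m ≤ c := by
    have : 2 ≤ 2 ^ (4*m) := by
      calc 2 = 2 ^ 1 := rfl
        _ ≤ 2 ^ (4*m) := Nat.pow_le_pow_right (by norm_num) (by omega)
    calc 4 * m = 2 * m * 2 := by ring
      _ ≤ 2 * m * 2 ^ (4*m) := Nat.mul_le_mul_left _ this
      _ ≤ c := by omega
  have hup := my_pi_upper (4*m) c (by omega) hjc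
  -- show m * π(2^c) - 2^c < a  (in ℤ)
  have hupZ : 4 * (m:ℤ) * Nat.primeCounting (2 ^ c) ≤ 4 * m * 2 ^ (4*m) + 2 * 2 ^ c := by
    exact_mod_cast hup
  have hNbig : 2 * (m:ℤ) * 2 ^ (4*m) - 2 * a < (2:ℤ) ^ c := by
    have ht : (-2) * a ≤ (((-2) * a).toNat : ℤ) := Int.self_le_toNat _
    have hcZ : ((c:ℕ):ℤ) < (2:ℤ) ^ c := by exact_mod_cast hcN
    have : (2 * m * 2 ^ (4*m) : ℤ) + ((-2) * a).toNat ≤ (c : ℤ) := by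
      rw [hc]; push_cast; linarith
    linarith
  have h2 : (m:ℤ) * Nat.primeCounting (2 ^ c) - (2:ℤ) ^ c < a := by linarith
  -- crossing
  have hn₀N : n₀ ≤ 2 ^ c := by omega
  obtain ⟨n, hn, he⟩ := my_cross m hm a (2 ^ c - n₀) n₀ h1
    (by
      rw [show n₀ + (2 ^ c - n₀) = 2 ^ c by omega, Nat.cast_sub hn₀N]
      push_cast
      linarith)
  have hn2 : 2 ≤ n := le_trans hn₀2 hn
  constructor
  · exact ⟨n, by omega, he⟩
  · refine ⟨Nat.primeCounting n, ?_, n, by linarith, rfl⟩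
    have : Nat.primeCounting 2 ≤ Nat.primeCounting n := Nat.monotone_primeCounting hn2
    have h2' : Nat.primeCounting 2 = 1 := by decide
    omega
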